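/- Define Q_ω(x,y) = (1 − exp(B^ω(x^{−1}) + B^ω(y^{−1})))/(x + y), where B^ω(w) = −Σ_{l≥1} ω_l w^{2l−1}. Then Q_ω(x,y) is a well-defined formal power series in x and y (i.e., the numerator is divisible by x+y), and it equals Σ_{n≥1} (1/n!) Σ_{l_1,…,l_n ≥ 1} (∏_{m=1}^{n} −ω_{l_m}) Σ_{i+j=2l_1−2, i,j≥0} (−1)^{i+1} Σ_{k=0}^{n−1} C(n−1,k) x^{i + Σ_{m=2}^{k+1}(2l_m−1)} y^{j + Σ_{m=k+2}^{n}(2l_m−1)}. -/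

import Mathlib

/-- The coefficient ring `ℚ[ω_1, ω_2, …]` (the variable `ω_0` plays no role). -/
abbrev OmegaRing : Type := MvPolynomial ℕ ℚ

/-- The series `B^ω(x⁻¹) + B^ω(y⁻¹) = −∑_{l≥1} ω_l x^{2l−1} − ∑_{l≥1} ω_l y^{2l−1}`
as an element of `ℚ[ω][[x,y]]`: the coefficient of `x^{2l−1}` (resp. `y^{2l−1}`) is `−ω_l`. -/
noncomputable def Bxy : MvPowerSeries (Fin 2) OmegaRing := fun d =>
  if d 1 = 0 ∧ Odd (d 0) then -(MvPolynomial.X ((d 0 + 1) / 2))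
  else if d 0 = 0 ∧ Odd (d 1) then -(MvPolynomial.X ((d 1 + 1) / 2))
  else 0

/-- `exp(B^ω(x⁻¹) + B^ω(y⁻¹))`, computed coefficientwise (the Taylor series truncates since
`Bxy` has zero constant term). -/
noncomputable def Exy : MvPowerSeries (Fin 2) OmegaRing := fun d =>
  ∑ k ∈ Finset.range (d 0 + d 1 + 1),
    (k.factorial : ℚ)⁻¹ • MvPowerSeries.coeff d (Bxy ^ k)

/-- The explicit series claimed to equal `Q_ω(x,y)`: its coefficient of `x^p y^q` is
`∑_{n≥1} (1/n!) ∑_{l_1,…,l_n ≥ 1} (∏_m −ω_{l_m}) ∑_{i+j=2l_1−2} (−1)^{i+1}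
∑_{k=0}^{n−1} C(n−1,k) [p = i + ∑_{m=2}^{k+1}(2l_m−1)] [q = j + ∑_{m=k+2}^{n}(2l_m−1)]`
(indices of tuples written 0-based; all sums truncate since large `n` or `l_m` give no
contribution to the coefficient of `x^p y^q`). -/
noncomputable def Qexp : MvPowerSeries (Fin 2) OmegaRing := fun d =>
  ∑ n ∈ Finset.range (d 0 + d 1 + 1), ((n + 1).factorial : ℚ)⁻¹ •
    ∑ l ∈ Fintype.piFinset (fun _ : Fin (n + 1) => Finset.Icc 1 (d 0 + d 1 + 2)),
      ∑ i ∈ Finset.range (2 * l 0 - 1),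
        ∑ k ∈ Finset.range (n + 1),
          (if d 0 = i + (∑ m : Fin (n + 1),
                if 1 ≤ (m : ℕ) ∧ (m : ℕ) ≤ k then 2 * l m - 1 else 0) ∧
              d 1 = (2 * l 0 - 2 - i) + (∑ m : Fin (n + 1),
                if k + 1 ≤ (m : ℕ) then 2 * l m - 1 else 0)
           then ((-1 : OmegaRing) ^ (i + 1)) * (n.choose k : OmegaRing) *
                ∏ m, (-(MvPolynomial.X (l m) : OmegaRing))
           else 0)

namespace Stmt15


open Finset MvPowerSeries

abbrev MS := MvPowerSeries (Fin 2) OmegaRing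

/-- `x^p y^q` as a `Finsupp`. -/
noncomputable def fs (p q : ℕ) : Fin 2 →₀ ℕ := Finsupp.single 0 p + Finsupp.single 1 q

@[simp] lemma fs_apply0 (p q : ℕ) : fs p q 0 = p := by simp [fs]
@[simp] lemma fs_apply1 (p q : ℕ) : fs p q 1 = q := by simp [fs]

lemma fin2_eq_iff (a b : Fin 2 →₀ ℕ) : a = b ↔ a 0 = b 0 ∧ a 1 = b 1 := by
  constructor
  · rintro rfl; exact ⟨rfl, rfl⟩
  · rintro ⟨h0, h1⟩
    ext v
    fin_cases v
    · exact h0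
    · exact h1

lemma fs_eq_self (d : Fin 2 →₀ ℕ) : fs (d 0) (d 1) = d := by
  rw [fin2_eq_iff]; simp

lemma fs_sub0 (p q : ℕ) (hp : 1 ≤ p) : fs p q - Finsupp.single 0 1 = fs (p - 1) q := by
  rw [fin2_eq_iff]; simp [Finsupp.sub_apply]

lemma fs_sub1 (p q : ℕ) (hq : 1 ≤ q) : fs p q - Finsupp.single 1 1 = fs p (q - 1) := by
  rw [fin2_eq_iff]; simp [Finsupp.sub_apply]

/-- product of monomials is a monomial -/
lemma monomial_prod {ι : Type*} (s : Finset ι) (e : ι → (Fin 2 →₀ ℕ)) (a : ι → OmegaRing) :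
    ∏ m ∈ s, (MvPowerSeries.monomial (e m)) (a m)
      = (MvPowerSeries.monomial (∑ m ∈ s, e m)) (∏ m ∈ s, a m) := by
  induction s using Finset.cons_induction with
  | empty => simp
  | cons x s hx ih =>
      rw [Finset.prod_cons, ih, MvPowerSeries.monomial_mul_monomial, Finset.sum_cons,
        Finset.prod_cons]

lemma coeff_pow_congr {f g : MS} {D : ℕ}
    (h : ∀ e : Fin 2 →₀ ℕ, e 0 + e 1 ≤ D → MvPowerSeries.coeff e f
      = MvPowerSeries.coeff e g) (n : ℕ) :
    ∀ d : Fin 2 →₀ ℕ, d 0 + d 1 ≤ D →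
      MvPowerSeries.coeff d (f ^ n) = MvPowerSeries.coeff d (g ^ n) := by
  induction n with
  | zero => intro d _; rfl
  | succ n ih =>
      intro d hd
      rw [pow_succ, pow_succ, MvPowerSeries.coeff_mul, MvPowerSeries.coeff_mul]
      refine Finset.sum_congr rfl fun z hz => ?_
      rw [Finset.HasAntidiagonal.mem_antidiagonal] at hz
      have h1 : z.1 0 + z.2 0 = d 0 := by rw [← hz]; simp
      have h2 : z.1 1 + z.2 1 = d 1 := by rw [← hz]; simp
      rw [ih z.1 (by omega), h z.2 (by omega)]

lemma coeff_pow_eq_zero {f : MS} (hf : MvPowerSeries.coeff 0 f = 0) :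
    ∀ (n : ℕ) (d : Fin 2 →₀ ℕ), d 0 + d 1 < n →
      MvPowerSeries.coeff d (f ^ n) = 0 := by
  intro n
  induction n with
  | zero => intro d hd; omega
  | succ n ih =>
      intro d hd
      rw [pow_succ', MvPowerSeries.coeff_mul]
      refine Finset.sum_eq_zero fun z hz => ?_
      rw [Finset.HasAntidiagonal.mem_antidiagonal] at hz
      have h1 : z.1 0 + z.2 0 = d 0 := by rw [← hz]; simp
      have h2 : z.1 1 + z.2 1 = d 1 := by rw [← hz]; simp
      by_cases h0 : z.1 = 0
      · rw [h0, hf, zero_mul]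
      · have : z.1 0 + z.1 1 ≥ 1 := by
          by_contra hc
          push_neg at hc
          exact h0 ((fin2_eq_iff z.1 0).2 ⟨by simp; omega, by simp; omega⟩)
        rw [ih z.2 (by omega), mul_zero]


/-- truncated `Bxy`. -/
noncomputable def Btr (N : ℕ) : MS :=
  ∑ z ∈ (Finset.Icc 1 N) ×ˢ (Finset.univ : Finset (Fin 2)),
    (MvPowerSeries.monomial (Finsupp.single z.2 (2 * z.1 - 1)))
      (-(MvPolynomial.X z.1))

/-- truncated `C` series, `C = (x^{2l-1}+y^{2l-1})/(x+y)` pieces. -/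
noncomputable def Ctr (N : ℕ) : MS :=
  ∑ z ∈ (Finset.Icc 1 N).sigma (fun l => Finset.range (2 * l - 1)),
    (MvPowerSeries.monomial (fs z.2 (2 * z.1 - 2 - z.2)))
      ((-1 : OmegaRing) ^ (z.2 + 1) * (-(MvPolynomial.X z.1)))

lemma X_mul_monomial (s : Fin 2) (e : Fin 2 →₀ ℕ) (r : OmegaRing) :
    (MvPowerSeries.X s : MS) * (MvPowerSeries.monomial e) r
      = (MvPowerSeries.monomial (Finsupp.single s 1 + e)) r := by
  rw [MvPowerSeries.X, MvPowerSeries.monomial_mul_monomial, one_mul]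

lemma single_add_fs0 (i j : ℕ) :
    Finsupp.single (0 : Fin 2) 1 + fs i j = fs (i + 1) j := by
  rw [fin2_eq_iff]; simp [add_comm]

lemma single_add_fs1 (i j : ℕ) :
    Finsupp.single (1 : Fin 2) 1 + fs i j = fs i (j + 1) := by
  rw [fin2_eq_iff]; simp [add_comm]

/-- the key telescoping identity `(x+y) Ctr = - Btr`. -/
lemma XY_mul_Ctr (N : ℕ) :
    (MvPowerSeries.X (0 : Fin 2) + MvPowerSeries.X (1 : Fin 2) : MS) * Ctr N = - Btr N := by
  rw [Ctr, Btr, Finset.mul_sum, Finset.sum_sigma, Finset.sum_product, ← Finset.sum_neg_distrib]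
  refine Finset.sum_congr rfl fun l hl => ?_
  rw [Finset.mem_Icc] at hl
  have key : ∀ i ∈ Finset.range (2 * l - 1),
      (MvPowerSeries.X (0:Fin 2) + MvPowerSeries.X 1 : MS) *
        (MvPowerSeries.monomial (fs i (2*l-2-i))) ((-1:OmegaRing)^(i+1) * (-(MvPolynomial.X l)))
      = (fun i => (MvPowerSeries.monomial (fs i (2*l-1 - i)))
          ((-1:OmegaRing)^i * (-(MvPolynomial.X l)))) (i+1)
        - (fun i => (MvPowerSeries.monomial (fs i (2*l-1 - i)))
          ((-1:OmegaRing)^i * (-(MvPolynomial.X l)))) i := by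
    intro i hi
    rw [Finset.mem_range] at hi
    simp only [add_mul, X_mul_monomial, single_add_fs0, single_add_fs1]
    have h1 : 2*l-1-(i+1) = 2*l-2-i := by omega
    have h2 : 2*l-2-i+1 = 2*l-1-i := by omega
    rw [h1, h2]
    have h3 : ((-1:OmegaRing)^(i+1)) = -((-1:OmegaRing)^i) := by ring
    rw [sub_eq_add_neg, ← map_neg]
    congr 1
    rw [h3]; ring
  rw [Finset.sum_congr rfl key,
    Finset.sum_range_sub (fun i => (MvPowerSeries.monomial (fs i (2*l-1 - i)))
      ((-1:OmegaRing)^i * (-(MvPolynomial.X l)))) (2*l-1)]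
  have hodd : Odd (2*l-1) := ⟨l - 1, by omega⟩
  have h4 : ((-1:OmegaRing)^(2*l-1)) = -1 := hodd.neg_one_pow
  have h5 : fs (2*l-1) (2*l-1-(2*l-1)) = Finsupp.single (0:Fin 2) (2*l-1) := by
    rw [fin2_eq_iff]; simp
  have h6 : fs 0 (2*l-1-0) = Finsupp.single (1:Fin 2) (2*l-1) := by
    rw [fin2_eq_iff]; simp
  rw [h4, h5, h6, Fin.sum_univ_two]
  rw [neg_one_mul, neg_neg, pow_zero, one_mul]
  simp only [map_neg]
  abel


lemma coeff_Bxy (d : Fin 2 →₀ ℕ) :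
    MvPowerSeries.coeff d Bxy
      = if d 1 = 0 ∧ Odd (d 0) then -(MvPolynomial.X ((d 0 + 1) / 2))
        else if d 0 = 0 ∧ Odd (d 1) then -(MvPolynomial.X ((d 1 + 1) / 2))
        else 0 := by
  rw [MvPowerSeries.coeff_apply]; rfl

lemma coeff_Btr (N : ℕ) (d : Fin 2 →₀ ℕ) (h : d 0 + d 1 < 2 * N) :
    MvPowerSeries.coeff d (Btr N) = MvPowerSeries.coeff d Bxy := by
  rw [Btr, map_sum, coeff_Bxy]
  simp only [MvPowerSeries.coeff_monomial]
  by_cases hA : d 1 = 0 ∧ Odd (d 0)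
  · obtain ⟨h1, h0⟩ := hA
    obtain ⟨r, hr⟩ := h0
    rw [Finset.sum_eq_single ((d 0 + 1)/2, (0 : Fin 2))]
    · have hd : d = Finsupp.single (((d 0 + 1)/2, (0 : Fin 2)).2) (2 * ((d 0 + 1)/2, (0 : Fin 2)).1 - 1) := by
        rw [fin2_eq_iff]
        constructor
        · simp; omega
        · simp [Finsupp.single_apply, h1]
      rw [if_pos hd, if_pos ⟨h1, ⟨r, hr⟩⟩]
    · rintro ⟨l, v⟩ hz hne
      rw [Finset.mem_product, Finset.mem_Icc] at hz
      rw [if_neg]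
      intro heq
      rw [fin2_eq_iff] at heq
      fin_cases v
      · simp [Finsupp.single_apply] at heq
        exact hne (by rw [Prod.ext_iff]; constructor <;> simp <;> omega)
      · simp [Finsupp.single_apply] at heq
        omega
    · intro hmem
      exfalso
      apply hmem
      rw [Finset.mem_product, Finset.mem_Icc]
      refine ⟨⟨by omega, by omega⟩, Finset.mem_univ _⟩
  · by_cases hB : d 0 = 0 ∧ Odd (d 1)
    · obtain ⟨h0, h1⟩ := hB
      obtain ⟨r, hr⟩ := h1
      rw [Finset.sum_eq_single ((d 1 + 1)/2, (1 : Fin 2))]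
      · have hd : d = Finsupp.single (((d 1 + 1)/2, (1 : Fin 2)).2) (2 * ((d 1 + 1)/2, (1 : Fin 2)).1 - 1) := by
          rw [fin2_eq_iff]
          constructor
          · simp [Finsupp.single_apply, h0]
          · simp; omega
        rw [if_pos hd, if_neg hA, if_pos ⟨h0, ⟨r, hr⟩⟩]
      · rintro ⟨l, v⟩ hz hne
        rw [Finset.mem_product, Finset.mem_Icc] at hz
        rw [if_neg]
        intro heq
        rw [fin2_eq_iff] at heq
        fin_cases v
        · simp [Finsupp.single_apply] at heq
          exact hA ⟨by omega, ⟨l - 1, by omega⟩⟩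
        · simp [Finsupp.single_apply] at heq
          exact hne (by rw [Prod.ext_iff]; constructor <;> simp <;> omega)
      · intro hmem
        exfalso
        apply hmem
        rw [Finset.mem_product, Finset.mem_Icc]
        refine ⟨⟨by omega, by omega⟩, Finset.mem_univ _⟩
    · rw [if_neg hA, if_neg hB]
      refine Finset.sum_eq_zero ?_
      rintro ⟨l, v⟩ hz
      rw [Finset.mem_product, Finset.mem_Icc] at hz
      rw [if_neg]
      intro heq
      rw [fin2_eq_iff] at heq
      fin_cases v
      · simp [Finsupp.single_apply] at heq
        exact hA ⟨by omega, ⟨l - 1, by omega⟩⟩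
      · simp [Finsupp.single_apply] at heq
        exact hB ⟨by omega, ⟨l - 1, by omega⟩⟩




open Finset

lemma perm_exists {n : ℕ} (S T : Finset (Fin n)) (h : S.card = T.card) :
    ∃ σ : Equiv.Perm (Fin n), ∀ m, σ m ∈ T ↔ m ∈ S := by
  have hc : Fintype.card {x // x ∈ S} = Fintype.card {x // x ∈ T} := by
    simp [Fintype.card_coe, h]
  have hc' : Fintype.card {x // ¬ x ∈ S} = Fintype.card {x // ¬ x ∈ T} := by
    rw [Fintype.card_subtype_compl, Fintype.card_subtype_compl, Fintype.card_coe,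
      Fintype.card_coe, h]
  let e1 : {x // x ∈ S} ≃ {x // x ∈ T} := Fintype.equivOfCardEq hc
  let e2 : {x // ¬ x ∈ S} ≃ {x // ¬ x ∈ T} := Fintype.equivOfCardEq hc'
  refine ⟨(Equiv.sumCompl (· ∈ S)).symm.trans ((e1.sumCongr e2).trans
    (Equiv.sumCompl (· ∈ T))), fun m => ?_⟩
  by_cases hm : m ∈ S
  · simp only [Equiv.trans_apply, Equiv.sumCompl_symm_apply_of_pos hm,
      Equiv.sumCongr_apply, Sum.map_inl, Equiv.sumCompl_apply_inl]
    exact iff_of_true (e1 ⟨m, hm⟩).2 hm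
  · simp only [Equiv.trans_apply, Equiv.sumCompl_symm_apply_of_neg hm,
      Equiv.sumCongr_apply, Sum.map_inr, Equiv.sumCompl_apply_inr]
    exact iff_of_false (e2 ⟨m, hm⟩).2 hm

/-- symmetrization: sums over `piFinset` depending on a subset only through the
indicated sums are invariant under replacing the subset by one of the same size. -/
lemma sym {n N : ℕ} (φ : ℕ → ℕ → OmegaRing) (S T : Finset (Fin n)) (h : S.card = T.card) :
    (∑ t ∈ Fintype.piFinset (fun _ : Fin n => Finset.Icc 1 N),
      φ (∑ m, if m ∈ S then 2 * t m - 1 else 0) (∑ m, if m ∉ S then 2 * t m - 1 else 0)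
        * ∏ m, (-(MvPolynomial.X (t m) : OmegaRing)))
    = ∑ t ∈ Fintype.piFinset (fun _ : Fin n => Finset.Icc 1 N),
      φ (∑ m, if m ∈ T then 2 * t m - 1 else 0) (∑ m, if m ∉ T then 2 * t m - 1 else 0)
        * ∏ m, (-(MvPolynomial.X (t m) : OmegaRing)) := by
  obtain ⟨σ, hσ⟩ := perm_exists S T h
  refine Finset.sum_nbij' (fun t => t ∘ σ.symm) (fun t => t ∘ σ) ?_ ?_ ?_ ?_ ?_
  · intro t ht
    rw [Fintype.mem_piFinset] at ht ⊢
    exact fun m => ht _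
  · intro t ht
    rw [Fintype.mem_piFinset] at ht ⊢
    exact fun m => ht _
  · intro t _; funext m; simp
  · intro t _; funext m; simp
  · intro t _
    have e1 : (∑ m, if m ∈ T then 2 * (t ∘ σ.symm) m - 1 else 0)
        = ∑ m, if m ∈ S then 2 * t m - 1 else 0 := by
      rw [← Equiv.sum_comp σ (fun m => if m ∈ T then 2 * (t ∘ σ.symm) m - 1 else 0)]
      refine Finset.sum_congr rfl fun m _ => ?_
      simp only [Function.comp_apply, Equiv.symm_apply_apply]
      rw [if_congr (hσ m) rfl rfl]
    have e2 : (∑ m, if m ∉ T then 2 * (t ∘ σ.symm) m - 1 else 0)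
        = ∑ m, if m ∉ S then 2 * t m - 1 else 0 := by
      rw [← Equiv.sum_comp σ (fun m => if m ∉ T then 2 * (t ∘ σ.symm) m - 1 else 0)]
      refine Finset.sum_congr rfl fun m _ => ?_
      simp only [Function.comp_apply, Equiv.symm_apply_apply]
      rw [if_congr (not_congr (hσ m)) rfl rfl]
    have e3 : (∏ m, (-(MvPolynomial.X ((t ∘ σ.symm) m) : OmegaRing)))
        = ∏ m, (-(MvPolynomial.X (t m) : OmegaRing)) := by
      rw [← Equiv.prod_comp σ (fun m => (-(MvPolynomial.X ((t ∘ σ.symm) m) : OmegaRing)))]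
      refine Finset.prod_congr rfl fun m _ => ?_
      simp
    rw [e1, e2, e3]

lemma card_filter_lt {n : ℕ} (k : ℕ) (hk : k ≤ n) :
    (Finset.univ.filter (fun m : Fin n => (m : ℕ) < k)).card = k := by
  rw [← Fintype.card_fin k, ← Finset.card_univ]
  refine Finset.card_bij' (fun m hm => (⟨(m : ℕ), by simpa using hm⟩ : Fin k))
    (fun a _ => (⟨(a : ℕ), lt_of_lt_of_le a.2 hk⟩ : Fin n)) ?_ ?_ ?_ ?_ <;> simp




open Finset

variable {M : Type*} [AddCommMonoid M]

lemma sum_piFinset_cons (n N : ℕ) (f : (Fin (n+1) → ℕ) → M) :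
    ∑ l ∈ Fintype.piFinset (fun _ : Fin (n+1) => Finset.Icc 1 N), f l
      = ∑ a ∈ Finset.Icc 1 N, ∑ t ∈ Fintype.piFinset (fun _ : Fin n => Finset.Icc 1 N),
          f (Fin.cons a t) := by
  rw [← Finset.sum_product']
  refine Finset.sum_nbij' (fun l => (l 0, Fin.tail l)) (fun z => Fin.cons z.1 z.2)
    ?_ ?_ ?_ ?_ ?_
  · intro l hl
    rw [Fintype.mem_piFinset] at hl
    rw [Finset.mem_product]
    exact ⟨hl 0, by rw [Fintype.mem_piFinset]; exact fun m => hl _⟩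
  · intro z hz
    rw [Finset.mem_product] at hz
    rw [Fintype.mem_piFinset]
    intro m
    refine Fin.cases ?_ ?_ m
    · show (Fin.cons z.1 z.2 : Fin (n+1) → ℕ) 0 ∈ Finset.Icc 1 N
      simpa using hz.1
    · intro m'
      show (Fin.cons z.1 z.2 : Fin (n+1) → ℕ) m'.succ ∈ Finset.Icc 1 N
      rw [Fin.cons_succ]
      have := hz.2
      rw [Fintype.mem_piFinset] at this
      exact this m'
  · intro l _; exact Fin.cons_self_tail l
  · intro z _; simp [Fin.tail]
  · intro l _; rw [Fin.cons_self_tail]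

lemma sum_piFinset_pair (n N : ℕ) (f : (Fin n → ℕ × Fin 2) → M) :
    ∑ h ∈ Fintype.piFinset (fun _ : Fin n => (Finset.Icc 1 N) ×ˢ (Finset.univ : Finset (Fin 2))), f h
      = ∑ t ∈ Fintype.piFinset (fun _ : Fin n => Finset.Icc 1 N), ∑ v : Fin n → Fin 2,
          f (fun m => (t m, v m)) := by
  rw [← Finset.sum_product']
  refine Finset.sum_nbij' (fun h => (fun m => (h m).1, fun m => (h m).2))
    (fun z => fun m => (z.1 m, z.2 m)) ?_ ?_ ?_ ?_ ?_
  · intro h hh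
    rw [Fintype.mem_piFinset] at hh
    rw [Finset.mem_product, Fintype.mem_piFinset]
    refine ⟨fun m => ?_, Finset.mem_univ _⟩
    have := hh m
    rw [Finset.mem_product] at this
    exact this.1
  · intro z hz
    rw [Finset.mem_product, Fintype.mem_piFinset] at hz
    rw [Fintype.mem_piFinset]
    intro m
    rw [Finset.mem_product]
    exact ⟨hz.1 m, Finset.mem_univ _⟩
  · intro h _; rfl
  · intro z _; rfl
  · intro h _; rfl

lemma sum_fn_fin2_powerset (n : ℕ) (f : (Fin n → Fin 2) → M) :
    ∑ v : Fin n → Fin 2, f v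
      = ∑ S ∈ (Finset.univ : Finset (Fin n)).powerset,
          f (fun m => if m ∈ S then 0 else 1) := by
  refine Finset.sum_nbij' (fun v => Finset.univ.filter (fun m => v m = 0))
    (fun S => fun m => if m ∈ S then 0 else 1) ?_ ?_ ?_ ?_ ?_
  · intro v _; exact Finset.mem_powerset.2 (Finset.filter_subset _ _)
  · intro S _; exact Finset.mem_univ _
  · intro v _
    funext m
    by_cases hv : v m = 0
    · simp [hv]
    · have : v m = 1 := by omega
      simp [this]
  · intro S _
    ext m
    by_cases hm : m ∈ S <;> simp [hm]
  · intro v _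
    congr 1
    funext m
    by_cases hv : v m = 0
    · simp [hv]
    · have : v m = 1 := by omega
      simp [hv, this]




open Finset

noncomputable def S1 (n N p q : ℕ) : OmegaRing :=
  ∑ l ∈ Fintype.piFinset (fun _ : Fin (n + 1) => Finset.Icc 1 N),
    ∑ i ∈ Finset.range (2 * l 0 - 1),
      ∑ k ∈ Finset.range (n + 1),
        (if p = i + (∑ m : Fin (n + 1),
              if 1 ≤ (m : ℕ) ∧ (m : ℕ) ≤ k then 2 * l m - 1 else 0) ∧
            q = (2 * l 0 - 2 - i) + (∑ m : Fin (n + 1),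
              if k + 1 ≤ (m : ℕ) then 2 * l m - 1 else 0)
         then ((-1 : OmegaRing) ^ (i + 1)) * (n.choose k : OmegaRing) *
              ∏ m, (-(MvPolynomial.X (l m) : OmegaRing))
         else 0)

lemma S1_extend (n p q N N' : ℕ) (hN : p + q + 2 ≤ 2 * N) (hNN : N ≤ N') :
    S1 n N p q = S1 n N' p q := by
  refine Finset.sum_subset (Fintype.piFinset_subset _ _ fun _ =>
    Finset.Icc_subset_Icc_right hNN) ?_
  intro l hl' hl
  rw [Fintype.mem_piFinset] at hl'
  rw [Fintype.mem_piFinset] at hl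
  push_neg at hl
  obtain ⟨m0, hm0⟩ := hl
  have hm0' := hl' m0
  rw [Finset.mem_Icc] at hm0'
  have hbig : N < l m0 := by
    rw [Finset.mem_Icc] at hm0
    omega
  refine Finset.sum_eq_zero fun i hi => Finset.sum_eq_zero fun k hk => ?_
  rw [Finset.mem_range] at hi hk
  rw [if_neg]
  rintro ⟨hp, hq⟩
  by_cases hm : (m0 : ℕ) = 0
  · have h0 : m0 = 0 := by ext; exact hm
    subst h0
    omega
  · by_cases hmk : (m0 : ℕ) ≤ k
    · have hA : (2 * l m0 - 1) ≤ (∑ m : Fin (n + 1),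
          if 1 ≤ (m : ℕ) ∧ (m : ℕ) ≤ k then 2 * l m - 1 else 0) := by
        have := Finset.single_le_sum (f := fun m : Fin (n+1) =>
          if 1 ≤ (m : ℕ) ∧ (m : ℕ) ≤ k then 2 * l m - 1 else 0)
          (fun _ _ => Nat.zero_le _) (Finset.mem_univ m0)
        rwa [if_pos ⟨by omega, hmk⟩] at this
      omega
    · have hB : (2 * l m0 - 1) ≤ (∑ m : Fin (n + 1),
          if k + 1 ≤ (m : ℕ) then 2 * l m - 1 else 0) := by
        have := Finset.single_le_sum (f := fun m : Fin (n+1) =>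
          if k + 1 ≤ (m : ℕ) then 2 * l m - 1 else 0)
          (fun _ _ => Nat.zero_le _) (Finset.mem_univ m0)
        rwa [if_pos (by omega)] at this
      omega

lemma S1_vanish (n N p q : ℕ) (h : p + q < n) : S1 n N p q = 0 := by
  refine Finset.sum_eq_zero fun l hl => Finset.sum_eq_zero fun i hi =>
    Finset.sum_eq_zero fun k hk => ?_
  rw [Fintype.mem_piFinset] at hl
  rw [Finset.mem_range] at hi hk
  rw [if_neg]
  rintro ⟨hp, hq⟩
  have hAB : n ≤ (∑ m : Fin (n + 1),
        if 1 ≤ (m : ℕ) ∧ (m : ℕ) ≤ k then 2 * l m - 1 else 0)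
      + (∑ m : Fin (n + 1), if k + 1 ≤ (m : ℕ) then 2 * l m - 1 else 0) := by
    rw [← Finset.sum_add_distrib]
    have hn : (n : ℕ) = ∑ m : Fin (n + 1), if 1 ≤ (m : ℕ) then 1 else 0 := by
      rw [Fin.sum_univ_succ]
      simp
    conv_lhs => rw [hn]
    refine Finset.sum_le_sum fun m _ => ?_
    have hlm : 1 ≤ l m := by
      have := hl m
      rw [Finset.mem_Icc] at this
      exact this.1
    by_cases h1 : 1 ≤ (m : ℕ)
    · by_cases h2 : (m : ℕ) ≤ k
      · rw [if_pos h1, if_pos ⟨h1, h2⟩]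
        omega
      · rw [if_pos h1, if_neg (by omega), if_pos (by omega)]
        omega
    · rw [if_neg h1]
      exact Nat.zero_le _
  omega


lemma inner_eq (n N p q i c0 : ℕ) (cf : OmegaRing) :
    (∑ k ∈ Finset.range (n+1), ∑ t ∈ Fintype.piFinset (fun _ : Fin n => Finset.Icc 1 N),
      (if p = i + (∑ m : Fin n, if (m : ℕ) < k then 2 * t m - 1 else 0) ∧
          q = c0 + (∑ m : Fin n, if k ≤ (m : ℕ) then 2 * t m - 1 else 0)
       then (n.choose k : OmegaRing) * cf else 0) * ∏ m : Fin n, (-(MvPolynomial.X (t m) : OmegaRing)))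
  = ∑ t ∈ Fintype.piFinset (fun _ : Fin n => Finset.Icc 1 N), ∑ v : Fin n → Fin 2,
      (if p = i + (∑ m : Fin n, if v m = 0 then 2 * t m - 1 else 0) ∧
          q = c0 + (∑ m : Fin n, if v m = 1 then 2 * t m - 1 else 0)
       then cf else 0) * ∏ m : Fin n, (-(MvPolynomial.X (t m) : OmegaRing)) := by
  symm
  calc
    ∑ t ∈ Fintype.piFinset (fun _ : Fin n => Finset.Icc 1 N), ∑ v : Fin n → Fin 2,
      (if p = i + (∑ m : Fin n, if v m = 0 then 2 * t m - 1 else 0) ∧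
          q = c0 + (∑ m : Fin n, if v m = 1 then 2 * t m - 1 else 0)
       then cf else 0) * ∏ m : Fin n, (-(MvPolynomial.X (t m) : OmegaRing))
    _ = ∑ t ∈ Fintype.piFinset (fun _ : Fin n => Finset.Icc 1 N),
        ∑ S ∈ (Finset.univ : Finset (Fin n)).powerset,
          (if p = i + (∑ m : Fin n, if m ∈ S then 2 * t m - 1 else 0) ∧
              q = c0 + (∑ m : Fin n, if m ∉ S then 2 * t m - 1 else 0)
           then cf else 0) * ∏ m : Fin n, (-(MvPolynomial.X (t m) : OmegaRing)) := by
        refine Finset.sum_congr rfl fun t _ => ?_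
        rw [sum_fn_fin2_powerset]
        refine Finset.sum_congr rfl fun S _ => ?_
        have h1 : (∑ m : Fin n, if (if m ∈ S then (0 : Fin 2) else 1) = 0
              then 2 * t m - 1 else 0)
            = ∑ m : Fin n, if m ∈ S then 2 * t m - 1 else 0 :=
          Finset.sum_congr rfl fun m _ => by by_cases hm : m ∈ S <;> simp [hm]
        have h2 : (∑ m : Fin n, if (if m ∈ S then (0 : Fin 2) else 1) = 1
              then 2 * t m - 1 else 0)
            = ∑ m : Fin n, if m ∉ S then 2 * t m - 1 else 0 :=
          Finset.sum_congr rfl fun m _ => by by_cases hm : m ∈ S <;> simp [hm]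
        rw [h1, h2]
    _ = ∑ S ∈ (Finset.univ : Finset (Fin n)).powerset,
        ∑ t ∈ Fintype.piFinset (fun _ : Fin n => Finset.Icc 1 N),
          (if p = i + (∑ m : Fin n, if m ∈ S then 2 * t m - 1 else 0) ∧
              q = c0 + (∑ m : Fin n, if m ∉ S then 2 * t m - 1 else 0)
           then cf else 0) * ∏ m : Fin n, (-(MvPolynomial.X (t m) : OmegaRing)) := Finset.sum_comm
    _ = ∑ k ∈ Finset.range (n+1), ∑ S ∈ Finset.powersetCard k (Finset.univ : Finset (Fin n)),
        ∑ t ∈ Fintype.piFinset (fun _ : Fin n => Finset.Icc 1 N),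
          (if p = i + (∑ m : Fin n, if m ∈ S then 2 * t m - 1 else 0) ∧
              q = c0 + (∑ m : Fin n, if m ∉ S then 2 * t m - 1 else 0)
           then cf else 0) * ∏ m : Fin n, (-(MvPolynomial.X (t m) : OmegaRing)) := by
        rw [Finset.sum_powerset, Finset.card_univ, Fintype.card_fin]
    _ = ∑ k ∈ Finset.range (n+1), ∑ S ∈ Finset.powersetCard k (Finset.univ : Finset (Fin n)),
        ∑ t ∈ Fintype.piFinset (fun _ : Fin n => Finset.Icc 1 N),
          (if p = i + (∑ m : Fin n, if m ∈ Finset.univ.filter (fun m : Fin n => (m : ℕ) < k)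
                then 2 * t m - 1 else 0) ∧
              q = c0 + (∑ m : Fin n, if m ∉ Finset.univ.filter (fun m : Fin n => (m : ℕ) < k)
                then 2 * t m - 1 else 0)
           then cf else 0) * ∏ m : Fin n, (-(MvPolynomial.X (t m) : OmegaRing)) := by
        refine Finset.sum_congr rfl fun k hk => Finset.sum_congr rfl fun S hS => ?_
        rw [Finset.mem_range] at hk
        rw [Finset.mem_powersetCard_univ] at hS
        exact sym (fun a b => if p = i + a ∧ q = c0 + b then cf else 0) S _
          (by rw [hS, card_filter_lt k (by omega)])
    _ = ∑ k ∈ Finset.range (n+1), (n.choose k : OmegaRing) *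
        ∑ t ∈ Fintype.piFinset (fun _ : Fin n => Finset.Icc 1 N),
          (if p = i + (∑ m : Fin n, if m ∈ Finset.univ.filter (fun m : Fin n => (m : ℕ) < k)
                then 2 * t m - 1 else 0) ∧
              q = c0 + (∑ m : Fin n, if m ∉ Finset.univ.filter (fun m : Fin n => (m : ℕ) < k)
                then 2 * t m - 1 else 0)
           then cf else 0) * ∏ m : Fin n, (-(MvPolynomial.X (t m) : OmegaRing)) := by
        refine Finset.sum_congr rfl fun k _ => ?_
        rw [Finset.sum_const, Finset.card_powersetCard, Finset.card_univ, Fintype.card_fin,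
          nsmul_eq_mul]
    _ = ∑ k ∈ Finset.range (n+1), ∑ t ∈ Fintype.piFinset (fun _ : Fin n => Finset.Icc 1 N),
      (if p = i + (∑ m : Fin n, if (m : ℕ) < k then 2 * t m - 1 else 0) ∧
          q = c0 + (∑ m : Fin n, if k ≤ (m : ℕ) then 2 * t m - 1 else 0)
       then (n.choose k : OmegaRing) * cf else 0) * ∏ m : Fin n, (-(MvPolynomial.X (t m) : OmegaRing)) := by
        refine Finset.sum_congr rfl fun k _ => ?_
        rw [Finset.mul_sum]
        refine Finset.sum_congr rfl fun t _ => ?_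
        have h1 : (∑ m : Fin n, if m ∈ Finset.univ.filter (fun m : Fin n => (m : ℕ) < k)
              then 2 * t m - 1 else 0)
            = ∑ m : Fin n, if (m : ℕ) < k then 2 * t m - 1 else 0 :=
          Finset.sum_congr rfl fun m _ => by simp [Finset.mem_filter]
        have h2 : (∑ m : Fin n, if m ∉ Finset.univ.filter (fun m : Fin n => (m : ℕ) < k)
              then 2 * t m - 1 else 0)
            = ∑ m : Fin n, if k ≤ (m : ℕ) then 2 * t m - 1 else 0 :=
          Finset.sum_congr rfl fun m _ => by simp [Finset.mem_filter, not_lt]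
        rw [h1, h2, ← mul_assoc, mul_ite, mul_zero]

lemma S1_eq (n N p q : ℕ) :
    S1 n N p q = MvPowerSeries.coeff (fs p q) (Ctr N * Btr N ^ n) := by
  have hBpow : (Btr N) ^ n = ∑ h ∈ Fintype.piFinset
      (fun _ : Fin n => (Finset.Icc 1 N) ×ˢ (Finset.univ : Finset (Fin 2))),
      (MvPowerSeries.monomial (∑ m : Fin n, Finsupp.single (h m).2 (2 * (h m).1 - 1)))
        (∏ m : Fin n, -(MvPolynomial.X (h m).1 : OmegaRing)) := by
    have h1 : (Btr N) ^ n = ∏ _m : Fin n, Btr N := by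
      rw [Finset.prod_const, Finset.card_univ, Fintype.card_fin]
    rw [h1]
    simp only [Btr]
    rw [Finset.prod_univ_sum]
    exact Finset.sum_congr rfl fun h _ => monomial_prod _ _ _
  have LHS_eq : S1 n N p q = ∑ l0 ∈ Finset.Icc 1 N, ∑ i ∈ Finset.range (2 * l0 - 1),
      ∑ k ∈ Finset.range (n+1), ∑ t ∈ Fintype.piFinset (fun _ : Fin n => Finset.Icc 1 N),
        (if p = i + (∑ m : Fin n, if (m : ℕ) < k then 2 * t m - 1 else 0) ∧
            q = (2*l0-2-i) + (∑ m : Fin n, if k ≤ (m : ℕ) then 2 * t m - 1 else 0)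
         then (n.choose k : OmegaRing) * (((-1 : OmegaRing) ^ (i+1)) * (-(MvPolynomial.X l0)))
         else 0)
        * ∏ m : Fin n, (-(MvPolynomial.X (t m) : OmegaRing)) := by
    unfold S1
    rw [sum_piFinset_cons]
    refine Finset.sum_congr rfl fun l0 _ => ?_
    simp only [Fin.cons_zero]
    rw [Finset.sum_comm]
    refine Finset.sum_congr rfl fun i _ => ?_
    rw [Finset.sum_comm]
    refine Finset.sum_congr rfl fun k _ => Finset.sum_congr rfl fun t _ => ?_
    have hA : (∑ m : Fin (n+1), if 1 ≤ (m : ℕ) ∧ (m : ℕ) ≤ k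
          then 2 * (Fin.cons l0 t : Fin (n+1) → ℕ) m - 1 else 0)
        = ∑ m : Fin n, if (m : ℕ) < k then 2 * t m - 1 else 0 := by
      rw [Fin.sum_univ_succ]
      simp only [Fin.cons_zero, Fin.cons_succ, Fin.val_zero, Fin.val_succ]
      rw [if_neg (by omega : ¬(1 ≤ 0 ∧ 0 ≤ k)), zero_add]
      exact Finset.sum_congr rfl fun m _ => if_congr (by omega) rfl rfl
    have hB : (∑ m : Fin (n+1), if k + 1 ≤ (m : ℕ)
          then 2 * (Fin.cons l0 t : Fin (n+1) → ℕ) m - 1 else 0)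
        = ∑ m : Fin n, if k ≤ (m : ℕ) then 2 * t m - 1 else 0 := by
      rw [Fin.sum_univ_succ]
      simp only [Fin.cons_zero, Fin.cons_succ, Fin.val_zero, Fin.val_succ]
      rw [if_neg (by omega : ¬(k + 1 ≤ 0)), zero_add]
      exact Finset.sum_congr rfl fun m _ => if_congr (by omega) rfl rfl
    have hP : (∏ m : Fin (n+1), (-(MvPolynomial.X ((Fin.cons l0 t : Fin (n+1) → ℕ) m) : OmegaRing)))
        = (-(MvPolynomial.X l0)) * ∏ m : Fin n, (-(MvPolynomial.X (t m) : OmegaRing)) := by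
      rw [Fin.prod_univ_succ]
      simp only [Fin.cons_zero, Fin.cons_succ]
    rw [hA, hB, hP, ite_mul, zero_mul]
    exact if_congr Iff.rfl (by ring) rfl
  have RHS_eq : MvPowerSeries.coeff (fs p q) (Ctr N * Btr N ^ n)
      = ∑ l0 ∈ Finset.Icc 1 N, ∑ i ∈ Finset.range (2 * l0 - 1),
        ∑ t ∈ Fintype.piFinset (fun _ : Fin n => Finset.Icc 1 N), ∑ v : Fin n → Fin 2,
          (if p = i + (∑ m : Fin n, if v m = 0 then 2 * t m - 1 else 0) ∧
              q = (2*l0-2-i) + (∑ m : Fin n, if v m = 1 then 2 * t m - 1 else 0)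
           then ((-1 : OmegaRing) ^ (i+1)) * (-(MvPolynomial.X l0)) else 0)
          * ∏ m : Fin n, (-(MvPolynomial.X (t m) : OmegaRing)) := by
    calc MvPowerSeries.coeff (fs p q) (Ctr N * Btr N ^ n)
        = ∑ z ∈ (Finset.Icc 1 N).sigma (fun l => Finset.range (2*l-1)),
          ∑ h ∈ Fintype.piFinset
            (fun _ : Fin n => (Finset.Icc 1 N) ×ˢ (Finset.univ : Finset (Fin 2))),
            (if fs p q = fs z.2 (2*z.1-2-z.2)
                + ∑ m : Fin n, Finsupp.single (h m).2 (2 * (h m).1 - 1)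
             then ((-1 : OmegaRing)^(z.2+1) * (-(MvPolynomial.X z.1)))
                * ∏ m : Fin n, (-(MvPolynomial.X (h m).1 : OmegaRing))
             else 0) := by
          rw [hBpow]
          simp only [Ctr]
          rw [Finset.sum_mul_sum, map_sum]
          refine Finset.sum_congr rfl fun z _ => ?_
          rw [map_sum]
          refine Finset.sum_congr rfl fun h _ => ?_
          rw [MvPowerSeries.monomial_mul_monomial, MvPowerSeries.coeff_monomial]
      _ = ∑ l0 ∈ Finset.Icc 1 N, ∑ i ∈ Finset.range (2*l0-1),
          ∑ h ∈ Fintype.piFinset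
            (fun _ : Fin n => (Finset.Icc 1 N) ×ˢ (Finset.univ : Finset (Fin 2))),
            (if fs p q = fs i (2*l0-2-i)
                + ∑ m : Fin n, Finsupp.single (h m).2 (2 * (h m).1 - 1)
             then ((-1 : OmegaRing)^(i+1) * (-(MvPolynomial.X l0)))
                * ∏ m : Fin n, (-(MvPolynomial.X (h m).1 : OmegaRing))
             else 0) := by
          rw [Finset.sum_sigma]
      _ = ∑ l0 ∈ Finset.Icc 1 N, ∑ i ∈ Finset.range (2 * l0 - 1),
        ∑ t ∈ Fintype.piFinset (fun _ : Fin n => Finset.Icc 1 N), ∑ v : Fin n → Fin 2,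
          (if p = i + (∑ m : Fin n, if v m = 0 then 2 * t m - 1 else 0) ∧
              q = (2*l0-2-i) + (∑ m : Fin n, if v m = 1 then 2 * t m - 1 else 0)
           then ((-1 : OmegaRing) ^ (i+1)) * (-(MvPolynomial.X l0)) else 0)
          * ∏ m : Fin n, (-(MvPolynomial.X (t m) : OmegaRing)) := by
          refine Finset.sum_congr rfl fun l0 _ => Finset.sum_congr rfl fun i _ => ?_
          rw [sum_piFinset_pair]
          refine Finset.sum_congr rfl fun t _ => Finset.sum_congr rfl fun v _ => ?_
          have hiff : (fs p q = fs i (2*l0-2-i)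
              + ∑ m : Fin n, Finsupp.single (v m) (2 * t m - 1))
            ↔ (p = i + (∑ m : Fin n, if v m = 0 then 2 * t m - 1 else 0) ∧
              q = (2*l0-2-i) + (∑ m : Fin n, if v m = 1 then 2 * t m - 1 else 0)) := by
            rw [fin2_eq_iff]
            simp only [Finsupp.add_apply, Finsupp.finset_sum_apply, fs_apply0, fs_apply1,
              Finsupp.single_apply]
          rw [ite_mul, zero_mul, if_congr hiff rfl rfl]
  rw [LHS_eq, RHS_eq]
  exact Finset.sum_congr rfl fun l0 _ => Finset.sum_congr rfl fun i _ =>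
    inner_eq n N p q i (2*l0-2-i) (((-1 : OmegaRing) ^ (i+1)) * (-(MvPolynomial.X l0)))

lemma coeff_X_mul' (d : Fin 2 →₀ ℕ) (s : Fin 2) (F : MS) :
    MvPowerSeries.coeff d (MvPowerSeries.X s * F)
      = if 1 ≤ d s then MvPowerSeries.coeff (d - Finsupp.single s 1) F else 0 := by
  rw [MvPowerSeries.X, MvPowerSeries.coeff_monomial_mul]
  by_cases h : 1 ≤ d s
  · rw [if_pos (Finsupp.single_le_iff.2 h), if_pos h, one_mul]
  · rw [if_neg (fun hc => h (Finsupp.single_le_iff.1 hc)), if_neg h]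

lemma pair_eq (d : Fin 2 →₀ ℕ) (n : ℕ) :
    (if 1 ≤ d 0 then S1 n (d 0 + d 1 + 2) (d 0 - 1) (d 1) else 0)
      + (if 1 ≤ d 1 then S1 n (d 0 + d 1 + 2) (d 0) (d 1 - 1) else 0)
    = - MvPowerSeries.coeff d (Btr (d 0 + d 1 + 2) ^ (n+1)) := by
  set N := d 0 + d 1 + 2 with hN
  have h1 : (if 1 ≤ d 0 then S1 n N (d 0 - 1) (d 1) else 0)
      = MvPowerSeries.coeff d (MvPowerSeries.X 0 * (Ctr N * Btr N ^ n)) := by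
    rw [coeff_X_mul']
    by_cases h : 1 ≤ d 0
    · rw [if_pos h, if_pos h, S1_eq]
      have hd : fs (d 0 - 1) (d 1) = d - Finsupp.single (0 : Fin 2) 1 := by
        rw [fin2_eq_iff]
        refine ⟨?_, ?_⟩ <;> simp [Finsupp.sub_apply]
      rw [hd]
    · rw [if_neg h, if_neg h]
  have h2 : (if 1 ≤ d 1 then S1 n N (d 0) (d 1 - 1) else 0)
      = MvPowerSeries.coeff d (MvPowerSeries.X 1 * (Ctr N * Btr N ^ n)) := by
    rw [coeff_X_mul']
    by_cases h : 1 ≤ d 1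
    · rw [if_pos h, if_pos h, S1_eq]
      have hd : fs (d 0) (d 1 - 1) = d - Finsupp.single (1 : Fin 2) 1 := by
        rw [fin2_eq_iff]
        refine ⟨?_, ?_⟩ <;> simp [Finsupp.sub_apply]
      rw [hd]
    · rw [if_neg h, if_neg h]
  rw [h1, h2, ← map_add, ← add_mul]
  have h3 : (MvPowerSeries.X (0 : Fin 2) + MvPowerSeries.X 1 : MS) * (Ctr N * Btr N ^ n)
      = -(Btr N ^ (n+1)) := by
    rw [← mul_assoc, XY_mul_Ctr, neg_mul, ← pow_succ']
  rw [h3, map_neg]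

theorem stmt15' :
    (MvPowerSeries.X (0 : Fin 2) + MvPowerSeries.X (1 : Fin 2)) * Qexp = 1 - Exy := by
  apply MvPowerSeries.ext
  intro d
  have hQcoeff : ∀ d' : Fin 2 →₀ ℕ, MvPowerSeries.coeff d' Qexp
      = ∑ n ∈ Finset.range (d' 0 + d' 1 + 1), ((n + 1).factorial : ℚ)⁻¹ •
          S1 n (d' 0 + d' 1 + 2) (d' 0) (d' 1) := fun d' => rfl
  have hBxy0 : MvPowerSeries.coeff 0 Bxy = 0 := by
    rw [coeff_Bxy]
    simp
  have hA : (if 1 ≤ d 0 then MvPowerSeries.coeff (d - Finsupp.single 0 1) Qexp else 0)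
      = ∑ n ∈ Finset.range (d 0 + d 1 + 1), ((n + 1).factorial : ℚ)⁻¹ •
          (if 1 ≤ d 0 then S1 n (d 0 + d 1 + 2) (d 0 - 1) (d 1) else 0) := by
    by_cases h : 1 ≤ d 0
    · rw [if_pos h, hQcoeff]
      have e0 : ((d - Finsupp.single (0 : Fin 2) 1 : Fin 2 →₀ ℕ)) 0 = d 0 - 1 := by simp [Finsupp.sub_apply]
      have e1 : ((d - Finsupp.single (0 : Fin 2) 1 : Fin 2 →₀ ℕ)) 1 = d 1 := by simp [Finsupp.sub_apply]
      rw [e0, e1]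
      have hr : d 0 - 1 + d 1 + 1 = d 0 + d 1 := by omega
      rw [hr]
      have hstep : ∀ n ∈ Finset.range (d 0 + d 1),
          ((n + 1).factorial : ℚ)⁻¹ • S1 n (d 0 - 1 + d 1 + 2) (d 0 - 1) (d 1)
          = ((n + 1).factorial : ℚ)⁻¹ • S1 n (d 0 + d 1 + 2) (d 0 - 1) (d 1) := by
        intro n _
        rw [S1_extend n (d 0 - 1) (d 1) (d 0 - 1 + d 1 + 2) (d 0 + d 1 + 2) (by omega) (by omega)]
      rw [Finset.sum_congr rfl hstep, Finset.sum_range_succ,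
        S1_vanish _ _ _ _ (by omega), ite_self, smul_zero, add_zero]
      exact Finset.sum_congr rfl fun n hn => by rw [if_pos h]
    · rw [if_neg h]
      symm
      refine Finset.sum_eq_zero fun n _ => ?_
      rw [if_neg h, smul_zero]
  have hB : (if 1 ≤ d 1 then MvPowerSeries.coeff (d - Finsupp.single 1 1) Qexp else 0)
      = ∑ n ∈ Finset.range (d 0 + d 1 + 1), ((n + 1).factorial : ℚ)⁻¹ •
          (if 1 ≤ d 1 then S1 n (d 0 + d 1 + 2) (d 0) (d 1 - 1) else 0) := by
    by_cases h : 1 ≤ d 1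
    · rw [if_pos h, hQcoeff]
      have e0 : ((d - Finsupp.single (1 : Fin 2) 1 : Fin 2 →₀ ℕ)) 0 = d 0 := by simp [Finsupp.sub_apply]
      have e1 : ((d - Finsupp.single (1 : Fin 2) 1 : Fin 2 →₀ ℕ)) 1 = d 1 - 1 := by simp [Finsupp.sub_apply]
      rw [e0, e1]
      have hr : d 0 + (d 1 - 1) + 1 = d 0 + d 1 := by omega
      rw [hr]
      have hstep : ∀ n ∈ Finset.range (d 0 + d 1),
          ((n + 1).factorial : ℚ)⁻¹ • S1 n (d 0 + (d 1 - 1) + 2) (d 0) (d 1 - 1)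
          = ((n + 1).factorial : ℚ)⁻¹ • S1 n (d 0 + d 1 + 2) (d 0) (d 1 - 1) := by
        intro n _
        rw [S1_extend n (d 0) (d 1 - 1) (d 0 + (d 1 - 1) + 2) (d 0 + d 1 + 2) (by omega) (by omega)]
      rw [Finset.sum_congr rfl hstep, Finset.sum_range_succ,
        S1_vanish _ _ _ _ (by omega), ite_self, smul_zero, add_zero]
      exact Finset.sum_congr rfl fun n hn => by rw [if_pos h]
    · rw [if_neg h]
      symm
      refine Finset.sum_eq_zero fun n _ => ?_
      rw [if_neg h, smul_zero]
  rw [add_mul, map_add, coeff_X_mul', coeff_X_mul', hA, hB, ← Finset.sum_add_distrib]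
  have hsum : ∀ n ∈ Finset.range (d 0 + d 1 + 1),
      (((n + 1).factorial : ℚ)⁻¹ • (if 1 ≤ d 0 then S1 n (d 0 + d 1 + 2) (d 0 - 1) (d 1) else 0)
        + ((n + 1).factorial : ℚ)⁻¹ • (if 1 ≤ d 1 then S1 n (d 0 + d 1 + 2) (d 0) (d 1 - 1) else 0))
      = ((n + 1).factorial : ℚ)⁻¹ • (- MvPowerSeries.coeff d (Bxy ^ (n+1))) := by
    intro n hn
    rw [← smul_add, pair_eq]
    congr 2
    exact coeff_pow_congr (D := d 0 + d 1)
      (fun e he => coeff_Btr (d 0 + d 1 + 2) e (by omega)) (n+1) d (le_refl _)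
  rw [Finset.sum_congr rfl hsum]
  have hrhs : MvPowerSeries.coeff d (1 - Exy)
      = MvPowerSeries.coeff d 1
        - ∑ k ∈ Finset.range (d 0 + d 1 + 1),
            (k.factorial : ℚ)⁻¹ • MvPowerSeries.coeff d (Bxy ^ k) := by
    rw [map_sub]
    rfl
  rw [hrhs]
  rw [Finset.sum_range_succ' (fun k => (k.factorial : ℚ)⁻¹ • MvPowerSeries.coeff d (Bxy ^ k))]
  have hf0 : ((Nat.factorial 0 : ℚ))⁻¹ • MvPowerSeries.coeff d (Bxy ^ 0)
      = MvPowerSeries.coeff d 1 := by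
    simp [Nat.factorial]
  rw [hf0]
  rw [Finset.sum_range_succ (fun n => ((n + 1).factorial : ℚ)⁻¹ •
    (- MvPowerSeries.coeff d (Bxy ^ (n+1))))]
  rw [coeff_pow_eq_zero hBxy0 (d 0 + d 1 + 1) d (by omega), neg_zero, smul_zero, add_zero]
  have : ∀ n ∈ Finset.range (d 0 + d 1),
      ((n + 1).factorial : ℚ)⁻¹ • (- MvPowerSeries.coeff d (Bxy ^ (n+1)))
      = - (((n + 1).factorial : ℚ)⁻¹ • MvPowerSeries.coeff d (Bxy ^ (n+1))) := by
    intro n _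
    rw [smul_neg]
  rw [Finset.sum_congr rfl this, Finset.sum_neg_distrib]
  abel

end Stmt15

/-- the numerator `1 − exp(B^ω(x⁻¹) + B^ω(y⁻¹))` is divisible by `x + y` in
`ℚ[ω][[x,y]]`, with quotient `Q_ω(x,y)` given by the explicit expansion `Qexp`:
`(x + y) · Qexp = 1 − exp(B^ω(x⁻¹) + B^ω(y⁻¹))`. -/
theorem stmt15 :
    (MvPowerSeries.X (0 : Fin 2) + MvPowerSeries.X (1 : Fin 2)) * Qexp = 1 - Exy := by
  exact Stmt15.stmt15'
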